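/- Given a nonnegative integer d and nonnegative integers N_x indexed by x ∈ F_q^n satisfying Σ_{x ∈ F_q^n} binom(N_x + n − 1, n) < binom(d + n, n), there exists a nonzero polynomial P of total degree at most d that vanishes at each x ∈ F_q^n with multiplicity at least N_x. -/

import Mathlib

open MvPolynomial

/-- The `i`-th Hasse derivative of a multivariate polynomial `P = Σ_m a_m x^m`. -/
noncomputable def hasseDeriv {F : Type*} [Field F] {σ : Type*} [Fintype σ] [DecidableEq σ]
    (i : σ →₀ ℕ) (P : MvPolynomial σ F) : MvPolynomial σ F :=
  ∑ m ∈ P.support, (∏ k, Nat.choose (m k) (i k)) •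
    MvPolynomial.monomial (m - i) (P.coeff m)

/-- `P` vanishes at `a` with multiplicity at least `N`: all Hasse derivatives of `P` of
weight strictly less than `N` vanish at `a`. -/
def HasMultAtLeast {F : Type*} [Field F] {σ : Type*} [Fintype σ] [DecidableEq σ]
    (P : MvPolynomial σ F) (a : σ → F) (N : ℕ) : Prop :=
  ∀ i : σ →₀ ℕ, (∑ k, i k) < N → MvPolynomial.eval a (hasseDeriv i P) = 0

noncomputable def multisetEquiv (n d : ℕ) :
    {m : Fin n → ℕ // ∑ k, m k = d} ≃ Sym (Fin n) d := by
  refine Equiv.subtypeEquiv (Finsupp.equivFunOnFinite.symm.trans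
    ⟨Finsupp.toMultiset, Multiset.toFinsupp, ?_, ?_⟩) ?_
  · intro f; simp
  · intro s; simp
  · intro m
    simp only [Equiv.trans_apply, Equiv.coe_fn_mk]
    rw [Finsupp.card_toMultiset, Finsupp.sum_fintype _ _ (fun _ => rfl)]
    simp

lemma card_sum_eq (n d : ℕ) :
    Nat.card {m : Fin n → ℕ // ∑ k, m k = d} = Nat.multichoose n d := by
  have h := Sym.card_sym_eq_multichoose (Fin n) d
  rw [Nat.card_congr (multisetEquiv n d), Nat.card_eq_fintype_card, h, Fintype.card_fin]

noncomputable def leEquiv (n d : ℕ) :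
    {m : Fin n → ℕ // ∑ k, m k ≤ d} ≃ {m : Fin (n+1) → ℕ // ∑ k, m k = d} where
  toFun m := ⟨Fin.snoc m.1 (d - ∑ k, m.1 k), by
    rw [Fin.sum_univ_castSucc]
    simp only [Fin.snoc_castSucc, Fin.snoc_last]
    omega⟩
  invFun m := ⟨Fin.init m.1, by
    have := m.2
    rw [Fin.sum_univ_castSucc] at this
    have h2 : ∑ k : Fin n, Fin.init m.1 k = ∑ k : Fin n, m.1 k.castSucc := rfl
    omega⟩
  left_inv m := by
    ext k
    simp [Fin.init_snoc]
  right_inv m := by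
    ext k
    have := m.2
    rw [Fin.sum_univ_castSucc] at this
    have h2 : ∑ k : Fin n, Fin.init m.1 k = ∑ k : Fin n, m.1 k.castSucc := rfl
    have h3 : d - ∑ k : Fin n, Fin.init m.1 k = m.1 (Fin.last n) := by omega
    show Fin.snoc (Fin.init m.1) (d - ∑ k : Fin n, Fin.init m.1 k) k = m.1 k
    rw [h3, Fin.snoc_init_self]

lemma card_sum_le (n d : ℕ) :
    Nat.card {m : Fin n → ℕ // ∑ k, m k ≤ d} = (d + n).choose n := by
  rw [Nat.card_congr (leEquiv n d), card_sum_eq, Nat.multichoose_eq]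
  have h1 : n + 1 + d - 1 = n + d := by omega
  rw [h1, Nat.add_comm d n, ← Nat.choose_symm (by omega : d ≤ n + d)]
  congr 1
  omega

lemma finite_sum_le (n d : ℕ) : Finite {m : Fin n → ℕ // ∑ k, m k ≤ d} :=
  Finite.of_equiv _ ((leEquiv n d).trans (multisetEquiv (n+1) d)).symm

lemma finite_sum_lt (n N : ℕ) : Finite {m : Fin n → ℕ // ∑ k, m k < N} := by
  have := finite_sum_le n N
  exact Finite.of_injective
    (fun m => (⟨m.1, le_of_lt m.2⟩ : {m : Fin n → ℕ // ∑ k, m k ≤ N}))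
    (fun a b hab => Subtype.ext (by simpa using congrArg Subtype.val hab))

lemma card_sum_lt (n N : ℕ) :
    Nat.card {m : Fin n → ℕ // ∑ k, m k < N} ≤ (N + n - 1).choose n := by
  cases N with
  | zero =>
    have : IsEmpty {m : Fin n → ℕ // ∑ k, m k < 0} := ⟨fun m => by have := m.2; omega⟩
    simp [Nat.card_of_isEmpty]
  | succ M =>
    have he : {m : Fin n → ℕ // ∑ k, m k < M + 1} = {m : Fin n → ℕ // ∑ k, m k ≤ M} := by
      congr 1; ext m; omega
    rw [he, card_sum_le]
    have : M + 1 + n - 1 = M + n := by omega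
    rw [this]

lemma eval_hasseDeriv_eq {F : Type*} [Field F] {σ : Type*} [Fintype σ] [DecidableEq σ]
    (i : σ →₀ ℕ) (x : σ → F) (P : MvPolynomial σ F) (s : Finset (σ →₀ ℕ))
    (hs : P.support ⊆ s) :
    MvPolynomial.eval x (hasseDeriv i P) =
      ∑ m ∈ s, ((∏ k, Nat.choose (m k) (i k) : ℕ) : F) *
        (P.coeff m * ∏ k, x k ^ (m k - i k)) := by
  have h1 : hasseDeriv i P = ∑ m ∈ s, (∏ k, Nat.choose (m k) (i k)) •
      MvPolynomial.monomial (m - i) (P.coeff m) := by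
    refine Finset.sum_subset hs (fun m _ hm => ?_)
    rw [MvPolynomial.notMem_support_iff.mp hm, map_zero, smul_zero]
  rw [h1, map_sum]
  refine Finset.sum_congr rfl (fun m _ => ?_)
  rw [← Nat.cast_smul_eq_nsmul F, smul_eq_C_mul, map_mul]
  simp only [eval_C, eval_monomial]
  rw [Finsupp.prod_fintype _ _ (fun _ => pow_zero _)]
  simp [Finsupp.tsub_apply, mul_assoc]

/-- Given `d` and prescribed multiplicities `N_x` for `x ∈ F_q^n` with
`Σ_x C(N_x + n − 1, n) < C(d + n, n)`, there is a nonzero polynomial of total degree at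
most `d` vanishing at each `x` with multiplicity at least `N_x`. -/
theorem exists_poly_vanish_mult {F : Type*} [Field F] [Fintype F] {n : ℕ}
    (d : ℕ) (N : (Fin n → F) → ℕ)
    (h : ∑ x : Fin n → F, Nat.choose (N x + n - 1) n < Nat.choose (d + n) n) :
    ∃ P : MvPolynomial (Fin n) F, P ≠ 0 ∧ P.totalDegree ≤ d ∧
      ∀ x : Fin n → F, HasMultAtLeast P x (N x) := by
  classical
  have hAfin : Finite {m : Fin n → ℕ // ∑ k, m k ≤ d} := finite_sum_le n d
  haveI := Fintype.ofFinite {m : Fin n → ℕ // ∑ k, m k ≤ d}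
  set A := {m : Fin n → ℕ // ∑ k, m k ≤ d} with hA
  haveI : ∀ x : Fin n → F, Fintype {i : Fin n → ℕ // ∑ k, i k < N x} := fun x =>
    haveI := finite_sum_lt n (N x); Fintype.ofFinite _
  set B := Σ x : Fin n → F, {i : Fin n → ℕ // ∑ k, i k < N x} with hB
  -- the linear map of evaluation conditions
  let L : (A → F) →ₗ[F] (B → F) :=
  { toFun := fun c b => ∑ m : A, c m *
      (((∏ k, Nat.choose (m.1 k) (b.2.1 k) : ℕ) : F) * ∏ k, b.1 k ^ (m.1 k - b.2.1 k))
    map_add' := by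
      intro a b; funext bb
      simp [add_mul, Finset.sum_add_distrib]
    map_smul' := by
      intro r a; funext bb
      simp [Finset.mul_sum, mul_assoc] }
  have hcardA : Fintype.card A = (d + n).choose n := by
    rw [← Nat.card_eq_fintype_card]; exact card_sum_le n d
  have hcardB : Fintype.card B < Fintype.card A := by
    have h2 : Fintype.card B ≤ ∑ x : Fin n → F, (N x + n - 1).choose n := by
      rw [Fintype.card_sigma]
      refine Finset.sum_le_sum fun x _ => ?_
      rw [← Nat.card_eq_fintype_card]; exact card_sum_lt n (N x)
    omega
  have hnotinj : ¬ Function.Injective L := by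
    intro hinj
    have hle := LinearMap.finrank_le_finrank_of_injective hinj
    rw [Module.finrank_fintype_fun_eq_card, Module.finrank_fintype_fun_eq_card] at hle
    omega
  rw [Function.not_injective_iff] at hnotinj
  obtain ⟨a, b, hab, hne⟩ := hnotinj
  set c := a - b with hc
  have hc0 : c ≠ 0 := sub_ne_zero.mpr hne
  have hLc : L c = 0 := by rw [map_sub, hab, sub_self]
  set em : A → (Fin n →₀ ℕ) := fun m => Finsupp.equivFunOnFinite.symm m.1 with hem
  have hem_inj : Function.Injective em := fun a b hh =>
    Subtype.ext (Finsupp.equivFunOnFinite.symm.injective hh)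
  set P : MvPolynomial (Fin n) F := ∑ m : A, MvPolynomial.monomial (em m) (c m) with hP
  have hcoeff : ∀ m0 : A, P.coeff (em m0) = c m0 := by
    intro m0
    rw [hP, MvPolynomial.coeff_sum, Finset.sum_eq_single m0]
    · simp [MvPolynomial.coeff_monomial]
    · intro m _ hm
      rw [MvPolynomial.coeff_monomial, if_neg (fun hh => hm (hem_inj hh))]
    · simp
  have hsupp : P.support ⊆ Finset.univ.image em := by
    refine MvPolynomial.support_sum.trans ?_
    intro u hu
    simp only [Finset.mem_biUnion, Finset.mem_univ, true_and] at hu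
    obtain ⟨m, hm⟩ := hu
    have : u ∈ if c m = 0 then (∅ : Finset (Fin n →₀ ℕ)) else {em m} := by
      rwa [MvPolynomial.support_monomial] at hm
    simp only [Finset.mem_image, Finset.mem_univ, true_and]
    by_cases hcm : c m = 0
    · rw [if_pos hcm] at this; exact absurd this (Finset.notMem_empty u)
    · rw [if_neg hcm, Finset.mem_singleton] at this
      exact ⟨m, this.symm⟩
  refine ⟨P, ?_, ?_, ?_⟩
  · -- nonzero
    obtain ⟨m0, hm0⟩ := Function.ne_iff.mp hc0
    intro hP0
    apply hm0
    rw [← hcoeff m0, hP0, MvPolynomial.coeff_zero]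
    rfl
  · -- total degree
    refine (MvPolynomial.totalDegree_finset_sum _ _).trans (Finset.sup_le fun m _ => ?_)
    refine (MvPolynomial.totalDegree_monomial_le _ _).trans ?_
    have hsum : (em m).sum (fun _ => id) = ∑ k, m.1 k :=
      Finsupp.sum_fintype _ _ (fun _ => rfl)
    rw [hsum]
    exact m.2
  · -- multiplicities
    intro x i hi
    have hi' : ∑ k, (i : Fin n → ℕ) k < N x := hi
    set bb : B := ⟨x, ⟨fun k => i k, hi'⟩⟩ with hbb
    have h0 : L c bb = 0 := by rw [hLc]; rfl
    rw [eval_hasseDeriv_eq i x P _ hsupp,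
      Finset.sum_image (fun a _ b _ hh => hem_inj hh), ← h0]
    refine Finset.sum_congr rfl fun m _ => ?_
    have hemk : ∀ k, em m k = m.1 k := fun k => rfl
    simp only [hemk, hcoeff m]
    show ((∏ k, Nat.choose (m.1 k) (i k) : ℕ) : F) *
        (c m * ∏ k, x k ^ (m.1 k - i k)) =
      c m * (((∏ k, Nat.choose (m.1 k) (i k) : ℕ) : F) * ∏ k, x k ^ (m.1 k - i k))
    ring
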